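/- Let G be a nonabelian P-group of order p^{n-1}q with n ≥ 4, where p is an odd prime and q a prime dividing p−1, i.e. G is a semidirect product of an elementary abelian normal subgroup of order p^{n-1} by a group of order q acting by a nontrivial power automorphism. Then G does not belong to C₃, i.e. ∑_{H ⊴ G} |H| > 2|G|. -/

import Mathlib

lemma aux_pow_surj {G : Type*} [Group G] {H : Subgroup G} {p : ℕ} (hp : p.Prime)
    (hel : ∀ x ∈ H, x ^ p = 1) {r : ℕ} (hr : ¬ p ∣ r) :
    ∀ y ∈ H, ∃ z ∈ H, z ^ r = y := by
  intro y hy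
  have hc : r.Coprime p := (Nat.Prime.coprime_iff_not_dvd hp |>.mpr hr).symm
  have ht : r ^ (p - 1) ≡ 1 [MOD p] := by
    have := Nat.ModEq.pow_totient hc
    rwa [Nat.totient_prime hp] at this
  have hs : r ^ (p - 1) % p = 1 := by
    have h1 : r ^ (p - 1) % p = 1 % p := ht
    rwa [Nat.mod_eq_of_lt hp.one_lt] at h1
  refine ⟨y ^ (r ^ (p - 2)), H.pow_mem hy _, ?_⟩
  rw [← pow_mul, ← pow_succ]
  have h2 : p - 2 + 1 = p - 1 := by have := hp.two_le; omega
  rw [h2]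
  conv_lhs => rw [← Nat.div_add_mod (r ^ (p - 1)) p, hs]
  rw [pow_add, pow_mul, hel y hy, one_pow, one_mul, pow_one]

lemma aux_comm {G : Type*} [Group G] {H : Subgroup G} {p m : ℕ} (hp : p.Prime)
    (hel : ∀ x ∈ H, x ^ p = 1)
    (hE : ∀ x ∈ H, ∀ y ∈ H, (x * y) ^ m = x ^ m * y ^ m)
    (hm0 : ¬ p ∣ m) (hm1 : ¬ p ∣ (m - 1)) (hm2 : 2 ≤ m) :
    ∀ a ∈ H, ∀ b ∈ H, a * b = b * a := by
  have key : ∀ x ∈ H, ∀ y ∈ H, x ^ m * y ^ (m - 1) = y ^ (m - 1) * x ^ m := by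
    obtain ⟨j, rfl⟩ : ∃ j, m = j + 2 := ⟨m - 2, by omega⟩
    have hsub : j + 2 - 1 = j + 1 := rfl
    intro x hx y hy
    simp only [hsub]
    have sc : x * (y * x) ^ (j + 1) = (x * y) ^ (j + 1) * x :=
      (SemiconjBy.pow_right (by simp [SemiconjBy, mul_assoc]) (j + 1))
    have h1 : x * (y * x) ^ (j + 1) * y = x ^ (j + 2) * y ^ (j + 2) := by
      rw [← hE x hx y hy, sc, mul_assoc, ← pow_succ]
    have h1' : (y * x) ^ (j + 1) = x ^ (j + 1) * y ^ (j + 1) := by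
      have e : (y * x) ^ (j + 1) = x⁻¹ * (x * (y * x) ^ (j + 1) * y) * y⁻¹ := by group
      rw [e, h1, pow_succ' x, pow_succ y]
      group
    have hA : (y * x) ^ (j + 2) = y * x ^ (j + 2) * y ^ (j + 1) := by
      rw [pow_succ' (y * x) (j + 1), h1', pow_succ' x (j + 1)]
      group
    have hB := hE y hy x hx
    have e2 : x ^ (j + 2) * y ^ (j + 1) = y⁻¹ * (y * x) ^ (j + 2) := by
      rw [hA]; group
    rw [e2, hB, pow_succ' y (j + 1)]
    group
  intro a ha b hb
  obtain ⟨x, hx, hxa⟩ := aux_pow_surj hp hel hm0 a ha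
  obtain ⟨y, hy, hyb⟩ := aux_pow_surj hp hel hm1 b hb
  rw [← hxa, ← hyb]
  exact key x hx y hy

lemma aux_hyperplanes (p d : ℕ) [Fact p.Prime] (V : Type*) [AddCommGroup V]
    [Module (ZMod p) V] [Finite V] (hcard : Nat.card V = p ^ d) :
    ∃ T : Finset (AddSubgroup V), p ^ d ≤ p * T.card ∧
      ∀ W ∈ T, p ^ (d - 1) ≤ Nat.card W := by
  classical
  have hp : p.Prime := Fact.out
  haveI : NeZero p := ⟨hp.ne_zero⟩
  letI : Fintype V := Fintype.ofFinite _
  have hfr : Module.finrank (ZMod p) V = d := by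
    have hc := Module.card_eq_pow_finrank (K := ZMod p) (V := V)
    rw [ZMod.card, ← Nat.card_eq_fintype_card, hcard] at hc
    exact Nat.pow_right_injective hp.two_le hc.symm
  haveI : Finite (Module.Dual (ZMod p) V) :=
    Finite.of_injective (fun f : Module.Dual (ZMod p) V => f.toFun)
      (fun f g hfg => LinearMap.ext (fun x => congrFun hfg x))
  letI : Fintype (Module.Dual (ZMod p) V) := Fintype.ofFinite _
  have cardD : Fintype.card (Module.Dual (ZMod p) V) = p ^ d := by
    have hc := Module.card_eq_pow_finrank (K := ZMod p) (V := Module.Dual (ZMod p) V)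
    rw [ZMod.card, Subspace.dual_finrank_eq, hfr] at hc
    exact hc
  have kercard : ∀ f : Module.Dual (ZMod p) V,
      p ^ (d - 1) ≤ Nat.card (LinearMap.ker f) := by
    intro f
    have hrn := LinearMap.finrank_range_add_finrank_ker f
    have hr1 : Module.finrank (ZMod p) (LinearMap.range f) ≤ 1 := by
      have := Submodule.finrank_le (LinearMap.range f)
      simpa using this
    letI : Fintype (LinearMap.ker f) := Fintype.ofFinite _
    have hck : Nat.card (LinearMap.ker f)
        = p ^ Module.finrank (ZMod p) (LinearMap.ker f) := by
      rw [Nat.card_eq_fintype_card, Module.card_eq_pow_finrank (K := ZMod p), ZMod.card]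
    rw [hck, hfr] at *
    exact Nat.pow_le_pow_right hp.pos (by omega)
  set Φ : Module.Dual (ZMod p) V → AddSubgroup V :=
    fun f => (LinearMap.ker f).toAddSubgroup with hΦ
  have Φinj : ∀ f g, Φ f = Φ g → LinearMap.ker f = LinearMap.ker g :=
    fun f g h => Submodule.toAddSubgroup_injective h
  refine ⟨Finset.univ.image Φ, ?_, ?_⟩
  · have hfiber : ∀ N ∈ Finset.univ.image Φ,
        ({f ∈ Finset.univ | Φ f = N} : Finset _).card ≤ p := by
      intro N hN
      obtain ⟨f₀, -, rfl⟩ := Finset.mem_image.mp hN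
      by_cases h0 : LinearMap.ker f₀ = ⊤
      · refine le_trans (Finset.card_le_card (t := ({0} : Finset (Module.Dual (ZMod p) V)))
          (fun g hg => ?_)) (by simpa using hp.one_lt.le)
        simp only [Finset.mem_filter, Finset.mem_univ, true_and] at hg
        have := Φinj _ _ hg
        rw [h0] at this
        simp only [Finset.mem_singleton]
        exact LinearMap.ker_eq_top.mp this
      · have hv : ∃ v, f₀ v ≠ 0 := by
          by_contra h
          push_neg at h
          exact h0 (LinearMap.ker_eq_top.mpr (LinearMap.ext (by simpa using h)))
        obtain ⟨v, hv⟩ := hv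
        have key : ∀ g' : Module.Dual (ZMod p) V, LinearMap.ker g' = LinearMap.ker f₀ →
            ∀ x, g' x = (f₀ x * (f₀ v)⁻¹) * g' v := by
          intro g' hker x
          have hw : x - (f₀ x * (f₀ v)⁻¹) • v ∈ LinearMap.ker f₀ := by
            rw [LinearMap.mem_ker, map_sub, map_smul, smul_eq_mul, mul_assoc,
              inv_mul_cancel₀ hv, mul_one, sub_self]
          rw [← hker] at hw
          rw [LinearMap.mem_ker, map_sub, map_smul, smul_eq_mul, sub_eq_zero] at hw
          exact hw
        have : ({f ∈ Finset.univ | Φ f = Φ f₀} : Finset _).card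
            ≤ (Finset.univ : Finset (ZMod p)).card := by
          apply Finset.card_le_card_of_injOn (fun g => g v)
            (fun g _ => Finset.mem_univ _)
          intro g₁ h₁ g₂ h₂ hval
          simp only [Finset.coe_filter, Finset.mem_univ, true_and, Set.mem_setOf_eq] at h₁ h₂
          apply LinearMap.ext
          intro x
          have hval' : g₁ v = g₂ v := hval
          rw [key g₁ (Φinj _ _ h₁) x, key g₂ (Φinj _ _ h₂) x, hval']
        simpa [ZMod.card] using this
    have := Finset.card_le_mul_card_image (f := Φ) Finset.univ p hfiber
    rwa [Finset.card_univ, cardD] at this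
  · intro W hW
    obtain ⟨f, -, rfl⟩ := Finset.mem_image.mp hW
    have : Nat.card (Φ f) = Nat.card (LinearMap.ker f) := rfl
    rw [this]
    exact kercard f

/-- The sum of the orders of all normal subgroups of `G`. -/
noncomputable def normalSum (G : Type*) [Group G] : ℕ :=
  ∑ᶠ (H : Subgroup G) (_ : H.Normal), Nat.card H

theorem nonabelian_Pgroup_large_rank_not_mem_C3 (p q n : ℕ) (hp : p.Prime) (hq : q.Prime)
    (hodd : Odd p) (hdvd : q ∣ p - 1) (hn : 4 ≤ n)
    (G : Type*) [Group G] [Finite G] (hG : Nat.card G = p ^ (n - 1) * q)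
    (H : Subgroup G) (hHn : H.Normal) (hHcard : Nat.card H = p ^ (n - 1))
    (hHel : ∀ x ∈ H, x ^ p = 1)
    (K : Subgroup G) (hKcard : Nat.card K = q) (hcompl : H.IsComplement' K)
    (hpow : ∀ k ∈ K, ∃ m : ℕ, ∀ x ∈ H, k * x * k⁻¹ = x ^ m)
    (hnontriv : ∃ k ∈ K, ∃ x ∈ H, k * x * k⁻¹ ≠ x) :
    2 * Nat.card G < normalSum G := by
  classical
  obtain ⟨k, hk, x0, hx0, hne⟩ := hnontriv
  obtain ⟨m, hm⟩ := hpow k hk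
  have hx0m : k * x0 * k⁻¹ = x0 ^ m := hm x0 hx0
  have hx0ne1 : x0 ≠ 1 := by
    rintro rfl; exact hne (by group)
  have hconjne1 : x0 ^ m ≠ 1 := by
    rw [← hx0m]
    intro h
    apply hx0ne1
    have : x0 = k⁻¹ * (k * x0 * k⁻¹) * k := by group
    rw [this, h]; group
  have hm0 : ¬ p ∣ m := by
    rintro ⟨t, rfl⟩
    exact hconjne1 (by rw [pow_mul, hHel x0 hx0, one_pow])
  have hmne0 : m ≠ 0 := by rintro rfl; exact hm0 ⟨0, rfl⟩
  have hm2 : 2 ≤ m := by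
    rcases Nat.lt_or_ge m 2 with h | h
    · interval_cases m
      · exact absurd rfl hmne0
      · exact absurd (by rw [hx0m, pow_one]) hne
    · exact h
  have hm1 : ¬ p ∣ (m - 1) := by
    rintro ⟨t, ht⟩
    apply hne
    rw [hx0m]
    have : m = (m - 1) + 1 := by omega
    rw [this, pow_succ, ht, pow_mul, hHel x0 hx0, one_pow, one_mul]
  have hE : ∀ x ∈ H, ∀ y ∈ H, (x * y) ^ m = x ^ m * y ^ m := by
    intro x hx y hy
    have h1 : k * (x * y) * k⁻¹ = (x * y) ^ m := hm _ (H.mul_mem hx hy)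
    have h2 : k * (x * y) * k⁻¹ = (k * x * k⁻¹) * (k * y * k⁻¹) := by group
    rw [← h1, h2, hm x hx, hm y hy]
  have hcomm : ∀ a ∈ H, ∀ b ∈ H, a * b = b * a := aux_comm hp hHel hE hm0 hm1 hm2
  -- all subgroups of `H` are normal in `G`
  have normal_of_le : ∀ N : Subgroup G, N ≤ H → N.Normal := by
    intro N hNH
    constructor
    intro x hx g
    obtain ⟨⟨⟨h, hh⟩, ⟨k', hk'⟩⟩, hgk, -⟩ := hcompl.existsUnique g
    obtain ⟨m', hm'⟩ := hpow k' hk'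
    simp only at hgk
    have hx' : x ∈ H := hNH hx
    have hgoal : g * x * g⁻¹ = x ^ m' := by
      rw [← hgk]
      calc h * k' * x * (h * k')⁻¹ = h * (k' * x * k'⁻¹) * h⁻¹ := by group
        _ = h * x ^ m' * h⁻¹ := by rw [hm' x hx']
        _ = x ^ m' * h * h⁻¹ := by rw [hcomm h hh _ (H.pow_mem hx' m')]
        _ = x ^ m' := by group
    rw [hgoal]
    exact N.pow_mem hx m'
  -- module structure on `H`
  letI cg : CommGroup ↥H :=
    { (inferInstance : Group ↥H) with
      mul_comm := fun a b => Subtype.ext (hcomm a.1 a.2 b.1 b.2) }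
  haveI : NeZero p := ⟨hp.ne_zero⟩
  haveI : Fact p.Prime := ⟨hp⟩
  letI : Module (ZMod p) (Additive ↥H) := AddCommGroup.zmodModule (by
    intro x
    apply Additive.toMul.injective
    rw [toMul_nsmul]
    exact Subtype.ext (hHel _ (Additive.toMul x).2))
  haveI : Finite (Additive ↥H) := Finite.of_equiv ↥H Additive.ofMul
  have cardV : Nat.card (Additive ↥H) = p ^ (n - 1) := by
    rw [Nat.card_congr Additive.toMul, hHcard]
  obtain ⟨T, hT1, hT2⟩ := aux_hyperplanes p (n - 1) (Additive ↥H) cardV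
  -- transfer to subgroups of `G`
  set Ψ : AddSubgroup (Additive ↥H) → Subgroup G :=
    fun A => Subgroup.map H.subtype (AddSubgroup.toSubgroup' A) with hΨ
  have Ψinj : Function.Injective Ψ := by
    intro A B hAB
    exact AddSubgroup.toSubgroup'.injective (Subgroup.map_injective H.subtype_injective hAB)
  have ΨleH : ∀ A, Ψ A ≤ H := fun A => Subgroup.map_subtype_le _
  have Ψcard : ∀ A, Nat.card (Ψ A) = Nat.card A := by
    intro A
    have c1 : Nat.card (Ψ A) = Nat.card (AddSubgroup.toSubgroup' A) :=
      (Nat.card_congr ((AddSubgroup.toSubgroup' A).equivMapOfInjective H.subtype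
        H.subtype_injective).toEquiv).symm
    rw [c1]
    rfl
  set T' : Finset (Subgroup G) := T.image Ψ with hT'
  have hT'card : T'.card = T.card := Finset.card_image_of_injective T Ψinj
  have hT'norm : ∀ N ∈ T', N.Normal := by
    intro N hN
    obtain ⟨A, -, rfl⟩ := Finset.mem_image.mp hN
    exact normal_of_le _ (ΨleH A)
  have hT'cardlb : ∀ N ∈ T', p ^ (n - 1 - 1) ≤ Nat.card N := by
    intro N hN
    obtain ⟨A, hA, rfl⟩ := Finset.mem_image.mp hN
    rw [Ψcard A]
    exact hT2 A hA
  have hT'top : (⊤ : Subgroup G) ∉ T' := by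
    intro hmem
    obtain ⟨A, -, hA⟩ := Finset.mem_image.mp hmem
    have h1 : Nat.card (Ψ A) ≤ Nat.card H := Subgroup.card_le_of_le (ΨleH A)
    rw [hA, Subgroup.card_top, hG, hHcard] at h1
    have h2 : 2 ≤ q := hq.two_le
    have h3 : 0 < p ^ (n - 1) := pow_pos hp.pos _
    have h4 : p ^ (n - 1) * 2 ≤ p ^ (n - 1) * q := Nat.mul_le_mul_left _ h2
    omega
  -- evaluate the finsum
  letI : Fintype (Subgroup G) := Fintype.ofFinite _
  have hns : normalSum G = ∑ N : Subgroup G, if N.Normal then Nat.card N else 0 := by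
    simp only [normalSum, finsum_eq_if]
    exact finsum_eq_sum_of_fintype _
  -- arithmetic
  have hTc : p ^ (n - 1 - 1) ≤ T.card := by
    have e1 : p * p ^ (n - 1 - 1) = p ^ (n - 1) := by
      rw [← pow_succ']
      congr 1
      omega
    apply Nat.le_of_mul_le_mul_left
    · rw [e1]; exact hT1
    · exact hp.pos
  have hqp : q < p := by
    have h1 : q ≤ p - 1 := Nat.le_of_dvd (by have := hp.two_le; omega) hdvd
    have := hp.two_le
    omega
  have key2 : p ^ (n - 1) * q < T'.card * p ^ (n - 1 - 1) := by
    calc p ^ (n - 1) * q < p ^ (n - 1) * p :=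
          Nat.mul_lt_mul_of_le_of_lt (le_refl _) hqp (pow_pos hp.pos _)
      _ = p ^ n := by rw [← pow_succ]; congr 1; omega
      _ ≤ p ^ (n - 1 - 1) * p ^ (n - 1 - 1) := by
          rw [← pow_add]; exact Nat.pow_le_pow_right hp.pos (by omega)
      _ ≤ T'.card * p ^ (n - 1 - 1) := by
          apply Nat.mul_le_mul_right
          rw [hT'card]; exact hTc
  have hsum1 : T'.card * p ^ (n - 1 - 1) ≤ ∑ N ∈ T', (if N.Normal then Nat.card N else 0) := by
    have : ∀ N ∈ T', p ^ (n - 1 - 1) ≤ (if N.Normal then Nat.card N else 0) := by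
      intro N hN
      rw [if_pos (hT'norm N hN)]
      exact hT'cardlb N hN
    calc T'.card * p ^ (n - 1 - 1) = ∑ _N ∈ T', p ^ (n - 1 - 1) := by
          rw [Finset.sum_const, smul_eq_mul]
      _ ≤ _ := Finset.sum_le_sum this
  calc 2 * Nat.card G = Nat.card G + p ^ (n - 1) * q := by rw [hG]; ring
    _ < Nat.card G + T'.card * p ^ (n - 1 - 1) := by exact Nat.add_lt_add_left key2 _
    _ ≤ Nat.card G + ∑ N ∈ T', (if N.Normal then Nat.card N else 0) :=
        Nat.add_le_add_left hsum1 _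
    _ = ∑ N ∈ insert ⊤ T', (if N.Normal then Nat.card N else 0) := by
        rw [Finset.sum_insert hT'top, if_pos (inferInstance : (⊤ : Subgroup G).Normal), Subgroup.card_top]
    _ ≤ ∑ N : Subgroup G, (if N.Normal then Nat.card N else 0) :=
        Finset.sum_le_sum_of_subset (Finset.subset_univ _)
    _ = normalSum G := hns.symm
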